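/- Let S_n* = {σ ∈ S_n : σ(i) ≤ i+1 for all i}. For every σ ∈ S_n*, the inversion number ℓ(σ) equals the number of indices i ∈ {1,…,n−1} with σ(i) = i+1. -/
import Mathlib


/-- The inversion number of a permutation of `Fin n`. -/
def inversions {n : ℕ} (σ : Equiv.Perm (Fin n)) : ℕ :=
  (Finset.univ.filter (fun p : Fin n × Fin n => p.1 < p.2 ∧ σ p.2 < σ p.1)).card

theorem inversions_eq_card_ascents_of_hessenberg {n : ℕ} (σ : Equiv.Perm (Fin n))
    (hσ : ∀ i : Fin n, (σ i : ℕ) ≤ (i : ℕ) + 1) :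
    inversions σ = (Finset.univ.filter (fun i : Fin n => (σ i : ℕ) = (i : ℕ) + 1)).card := by
  classical
  -- Key lemma: for each m < n there is exactly one j with m ≤ j and σ j ≤ m.
  have key : ∀ m : ℕ, m < n → ∃! j : Fin n, m ≤ (j : ℕ) ∧ (σ j : ℕ) ≤ m := by
    intro m hm
    set A : Finset (Fin n) := Finset.univ.filter (fun j => (σ j : ℕ) ≤ m) with hA
    set B : Finset (Fin n) := Finset.univ.filter (fun v => (v : ℕ) ≤ m) with hB
    set C : Finset (Fin n) := Finset.univ.filter (fun j => (j : ℕ) < m) with hC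
    have hAB : A.card = B.card := by
      apply Finset.card_bij (fun j _ => σ j)
      · intro a ha
        simp only [hA, hB, Finset.mem_filter, Finset.mem_univ, true_and] at ha ⊢
        exact ha
      · intro a _ b _ h
        exact σ.injective h
      · intro b hb
        refine ⟨σ.symm b, ?_, by simp⟩
        simp only [hA, hB, Finset.mem_filter, Finset.mem_univ, true_and,
          Equiv.apply_symm_apply] at hb ⊢
        exact hb
    have hBcard : B.card = m + 1 := by
      have : B = Finset.Iic (⟨m, hm⟩ : Fin n) := by
        ext v
        simp [hB, Fin.le_def]
      rw [this, Fin.card_Iic]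
    have hCcard : C.card = m := by
      have : C = Finset.Iio (⟨m, hm⟩ : Fin n) := by
        ext v
        simp [hC, Fin.lt_def]
      rw [this, Fin.card_Iio]
    have hCA : C ⊆ A := by
      intro j hj
      simp only [hC, hA, Finset.mem_filter, Finset.mem_univ, true_and] at hj ⊢
      have := hσ j
      omega
    have hT : (A \ C).card = 1 := by
      rw [Finset.card_sdiff_of_subset hCA, hAB, hBcard, hCcard]
      omega
    obtain ⟨a, ha⟩ := Finset.card_eq_one.mp hT
    have hmem : ∀ j : Fin n, j ∈ A \ C ↔ (m ≤ (j : ℕ) ∧ (σ j : ℕ) ≤ m) := by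
      intro j
      simp only [Finset.mem_sdiff, hA, hC, Finset.mem_filter, Finset.mem_univ, true_and]
      omega
    refine ⟨a, ?_, ?_⟩
    · exact (hmem a).mp (ha ▸ Finset.mem_singleton_self a)
    · intro j hj
      have : j ∈ A \ C := (hmem j).mpr hj
      rw [ha, Finset.mem_singleton] at this
      exact this
  unfold inversions
  apply Finset.card_bij (fun p _ => p.1)
  · -- maps into ascent set
    intro p hp
    simp only [Finset.mem_filter, Finset.mem_univ, true_and] at hp ⊢
    obtain ⟨h12, hinv⟩ := hp
    by_contra hne
    have h1 : (σ p.1 : ℕ) ≤ (p.1 : ℕ) := by have := hσ p.1; omega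
    have h2 : (σ p.2 : ℕ) ≤ (p.1 : ℕ) := by
      have := Fin.lt_def.mp hinv; omega
    obtain ⟨j, _, huniq⟩ := key (p.1 : ℕ) p.1.isLt
    have e1 : p.1 = j := huniq p.1 ⟨le_refl _, h1⟩
    have e2 : p.2 = j := huniq p.2 ⟨le_of_lt (Fin.lt_def.mp h12), h2⟩
    rw [e1, e2] at h12
    exact lt_irrefl _ h12
  · -- injective
    intro p hp q hq hpq
    simp only [Finset.mem_filter, Finset.mem_univ, true_and] at hp hq
    obtain ⟨hp12, hpinv⟩ := hp
    obtain ⟨hq12, hqinv⟩ := hq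
    obtain ⟨j, _, huniq⟩ := key (p.1 : ℕ) p.1.isLt
    have hσp1 := hσ p.1
    have e1 : p.2 = j := by
      apply huniq
      constructor
      · exact le_of_lt (Fin.lt_def.mp hp12)
      · have := Fin.lt_def.mp hpinv; omega
    have e2 : q.2 = j := by
      apply huniq
      constructor
      · rw [hpq]; exact le_of_lt (Fin.lt_def.mp hq12)
      · have h := Fin.lt_def.mp hqinv
        have : (σ q.1 : ℕ) ≤ (q.1 : ℕ) + 1 := hσ q.1
        rw [← hpq] at *
        omega
    ext
    · exact congrArg Fin.val hpq
    · rw [e1, e2]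
  · -- surjective
    intro i hi
    simp only [Finset.mem_filter, Finset.mem_univ, true_and] at hi
    obtain ⟨j, ⟨hij, hji⟩, _⟩ := key (i : ℕ) i.isLt
    have hne : (i : ℕ) < (j : ℕ) := by
      rcases lt_or_eq_of_le hij with h | h
      · exact h
      · exfalso
        have : j = i := Fin.ext h.symm
        rw [this] at hji
        omega
    refine ⟨(i, j), ?_, rfl⟩
    simp only [Finset.mem_filter, Finset.mem_univ, true_and]
    exact ⟨Fin.lt_def.mpr hne, Fin.lt_def.mpr (by omega)⟩
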